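/- Let p be an odd prime and let ε ∈ 𝔽_p be a non-square. Let M ∈ GL₂(𝔽_p) satisfy M² = εI (where I is the identity matrix). Then there exists a matrix A ∈ SL₂(ℤ) such that Ā M Ā⁻¹ = (0 1; ε 0), where Ā denotes the reduction of A modulo p. -/

import Mathlib

open Matrix

/-- The Cartan non-split ring mod `p`: the set of matrices `(a b; c d)` over `𝔽_p`
with `a = d` and `c = ε * b`. -/
def CnsSet (p : ℕ) (ε : ZMod p) : Set (Matrix (Fin 2) (Fin 2) (ZMod p)) :=
  {A | A 0 0 = A 1 1 ∧ A 1 0 = ε * A 0 1}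

/-- The matrix `(0 1; ε 0)`. -/
def Jmat (p : ℕ) (ε : ZMod p) : Matrix (Fin 2) (Fin 2) (ZMod p) := !![0, 1; ε, 0]

lemma cast_val_int (p : ℕ) [NeZero p] (y : ZMod p) : (((y.val : ℤ)) : ZMod p) = y := by
  push_cast
  rw [ZMod.natCast_val, ZMod.cast_id]

/-- Existence of coprime integer lifts of a nonzero pair in `ZMod p`. -/
lemma exists_coprime_lift (p : ℕ) [Fact p.Prime] (x y : ZMod p) (h : ¬(x = 0 ∧ y = 0)) :
    ∃ a b : ℤ, IsCoprime a b ∧ (a : ZMod p) = x ∧ (b : ZMod p) = y := by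
  have hp : p.Prime := Fact.out
  by_cases hx : x = 0
  · -- then y ≠ 0; take a = p, b = y.val
    have hy : y ≠ 0 := fun hy => h ⟨hx, hy⟩
    have hnd : ¬ p ∣ y.val := by
      rw [← ZMod.natCast_eq_zero_iff, ZMod.natCast_val, ZMod.cast_id]
      exact hy
    refine ⟨(p : ℤ), (y.val : ℤ), ?_, ?_, cast_val_int p y⟩
    · rw [Int.isCoprime_iff_gcd_eq_one, Int.gcd_natCast_natCast]
      exact (Nat.Prime.coprime_iff_not_dvd hp).mpr hnd
    · simp [hx]
  · -- x ≠ 0; take a = x.val, tweak lift of y to be ≡ 1 mod a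
    set a : ℤ := (x.val : ℤ) with ha
    have hpa : IsCoprime (p : ℤ) a := by
      have hnd : ¬ p ∣ x.val := by
        rw [← ZMod.natCast_eq_zero_iff, ZMod.natCast_val, ZMod.cast_id]
        exact hx
      rw [ha, Int.isCoprime_iff_gcd_eq_one, Int.gcd_natCast_natCast]
      exact (Nat.Prime.coprime_iff_not_dvd hp).mpr hnd
    obtain ⟨u, v, huv⟩ := hpa
    set b : ℤ := (y.val : ℤ) + p * (u * (1 - (y.val : ℤ))) with hb
    have hdvd : a ∣ b - 1 := by
      refine ⟨-(1 - (y.val : ℤ)) * v, ?_⟩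
      have hpu : (p : ℤ) * u = 1 - v * a := by linarith [huv]
      calc (y.val : ℤ) + p * (u * (1 - (y.val : ℤ))) - 1
          = (y.val : ℤ) + ((p : ℤ) * u) * (1 - (y.val : ℤ)) - 1 := by ring
        _ = (y.val : ℤ) + (1 - v * a) * (1 - (y.val : ℤ)) - 1 := by rw [hpu]
        _ = a * (-(1 - (y.val : ℤ)) * v) := by ring
    obtain ⟨m, hm⟩ := hdvd
    refine ⟨a, b, ⟨-m, 1, by linarith [hm]⟩, by rw [ha]; exact cast_val_int p x, ?_⟩
    · rw [hb]
      push_cast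
      simp [ZMod.natCast_val, ZMod.cast_id]

/-- Surjectivity of the reduction `SL₂(ℤ) → SL₂(𝔽_p)`, in explicit matrix form. -/
lemma exists_SL2_lift (p : ℕ) [Fact p.Prime] (B : Matrix (Fin 2) (Fin 2) (ZMod p))
    (hB : B.det = 1) :
    ∃ A : Matrix.SpecialLinearGroup (Fin 2) ℤ,
      (Matrix.SpecialLinearGroup.map (Int.castRingHom (ZMod p)) A
        : Matrix (Fin 2) (Fin 2) (ZMod p)) = B := by
  rw [Matrix.det_fin_two] at hB
  have hrow : ¬(B 0 0 = 0 ∧ B 0 1 = 0) := by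
    rintro ⟨h1, h2⟩
    rw [h1, h2] at hB
    simp at hB
  obtain ⟨a, b, hab, hax, hby⟩ := exists_coprime_lift p (B 0 0) (B 0 1) hrow
  set c : ℤ := ((B 1 0).val : ℤ) with hc
  set d : ℤ := ((B 1 1).val : ℤ) with hd
  have hcB : (c : ZMod p) = B 1 0 := cast_val_int p _
  have hdB : (d : ZMod p) = B 1 1 := cast_val_int p _
  have hk : (p : ℤ) ∣ (a * d - b * c - 1) := by
    rw [← ZMod.intCast_zmod_eq_zero_iff_dvd]
    push_cast
    rw [hax, hby, hcB, hdB, ← hB]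
    ring
  obtain ⟨k, hk⟩ := hk
  obtain ⟨u, v, huv⟩ := hab
  -- a * (k*u) - b * (-(k*v)) = k
  have hdet : Matrix.det !![a, b; c - p * (-(k * v)), d - p * (k * u)] = 1 := by
    rw [Matrix.det_fin_two_of]
    linear_combination hk - (p * k) * huv
  refine ⟨⟨!![a, b; c - p * (-(k * v)), d - p * (k * u)], hdet⟩, ?_⟩
  show (Int.castRingHom (ZMod p)).mapMatrix !![a, b; c - p * (-(k * v)), d - p * (k * u)] = B
  ext i j
  fin_cases i <;> fin_cases j <;>
    simp [Matrix.SpecialLinearGroup.map, RingHom.mapMatrix] <;>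
    push_cast <;> simp [hax, hby, hcB, hdB]

/-- A nondegenerate diagonal binary quadratic form over `𝔽_p`, `p` odd, represents 1. -/
lemma exists_quad_rep (p : ℕ) [Fact p.Prime] (hp : Odd p) (α β : ZMod p)
    (hα : α ≠ 0) (hβ : β ≠ 0) : ∃ u v : ZMod p, α * u ^ 2 + β * v ^ 2 = 1 := by
  have hcard : Fintype.card (ZMod p) % 2 = 1 := by
    rw [ZMod.card]
    exact Nat.odd_iff.mp hp
  have hf : (Polynomial.C α * Polynomial.X ^ 2 : Polynomial (ZMod p)).degree = 2 := by
    simpa using Polynomial.degree_C_mul_X_pow 2 hα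
  have h1 : (Polynomial.C β * Polynomial.X ^ 2 : Polynomial (ZMod p)).degree = 2 := by
    simpa using Polynomial.degree_C_mul_X_pow 2 hβ
  have hg : (Polynomial.C β * Polynomial.X ^ 2 - Polynomial.C 1 : Polynomial (ZMod p)).degree
      = 2 := by
    rw [Polynomial.degree_sub_eq_left_of_degree_lt, h1]
    rw [h1]
    exact lt_of_le_of_lt (Polynomial.degree_C_le) (by norm_num)
  obtain ⟨u, v, huv⟩ := FiniteField.exists_root_sum_quadratic hf hg hcard
  refine ⟨u, v, ?_⟩
  simp only [Polynomial.eval_mul, Polynomial.eval_pow, Polynomial.eval_X, Polynomial.eval_C,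
    Polynomial.eval_sub, Polynomial.eval_add, Polynomial.eval_one] at huv
  linear_combination huv

/-- Any `M ∈ GL₂(𝔽_p)` with `M² = ε·I` is conjugate to `(0 1; ε 0)` by the reduction of
a matrix in `SL₂(ℤ)`. -/
theorem conjugate_to_standard (p : ℕ) [Fact p.Prime] (hp : Odd p)
    (ε : ZMod p) (hε : ¬ IsSquare ε)
    (M : Matrix (Fin 2) (Fin 2) (ZMod p)) (hM : IsUnit M)
    (hM2 : M ^ 2 = ε • (1 : Matrix (Fin 2) (Fin 2) (ZMod p))) :
    ∃ A : Matrix.SpecialLinearGroup (Fin 2) ℤ,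
      (Matrix.SpecialLinearGroup.map (Int.castRingHom (ZMod p)) A
          : Matrix (Fin 2) (Fin 2) (ZMod p)) * M *
        ((Matrix.SpecialLinearGroup.map (Int.castRingHom (ZMod p)) A)⁻¹
          : Matrix (Fin 2) (Fin 2) (ZMod p)) = Jmat p ε := by
  rw [sq] at hM2
  set m00 := M 0 0 with hm00d
  set m01 := M 0 1 with hm01d
  set m10 := M 1 0 with hm10d
  set m11 := M 1 1 with hm11d
  have h00 : m00 * m00 + m01 * m10 = ε := by
    have := congrFun (congrFun hM2 0) 0
    simpa [Matrix.mul_apply, Fin.sum_univ_two, Matrix.one_apply] using this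
  have h01 : m00 * m01 + m01 * m11 = 0 := by
    have := congrFun (congrFun hM2 0) 1
    simpa [Matrix.mul_apply, Fin.sum_univ_two, Matrix.one_apply] using this
  have h10 : m10 * m00 + m11 * m10 = 0 := by
    have := congrFun (congrFun hM2 1) 0
    simpa [Matrix.mul_apply, Fin.sum_univ_two, Matrix.one_apply] using this
  have h11 : m10 * m01 + m11 * m11 = ε := by
    have := congrFun (congrFun hM2 1) 1
    simpa [Matrix.mul_apply, Fin.sum_univ_two, Matrix.one_apply] using this
  have hε0 : ε ≠ 0 := fun h => hε (h ▸ ⟨0, by ring⟩)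
  have hm01 : m01 ≠ 0 := by
    intro h
    exact hε ⟨m00, by rw [← h00, h]; ring⟩
  have htr : m11 = -m00 := by
    have h : m01 * (m00 + m11) = 0 := by linear_combination h01
    have h2 := (mul_eq_zero.mp h).resolve_left hm01
    linear_combination h2
  rw [htr] at h10 h11
  set t : ZMod p := m01⁻¹ with htdef
  have ht : m01 * t = 1 := mul_inv_cancel₀ hm01
  have ht0 : t ≠ 0 := inv_ne_zero hm01
  obtain ⟨u, v, huv⟩ := exists_quad_rep p hp m01 (-(ε * t)) hm01
    (neg_ne_zero.mpr (mul_ne_zero hε0 ht0))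
  set a : ZMod p := u + m00 * v * t with hadef
  set b : ZMod p := v with hbdef
  set c : ZMod p := a * m00 + b * m10 with hcdef
  set d : ZMod p := a * m01 - b * m00 with hddef
  set B : Matrix (Fin 2) (Fin 2) (ZMod p) := !![a, b; c, d] with hBdef
  have hdet : B.det = 1 := by
    rw [hBdef, Matrix.det_fin_two_of, hcdef, hddef, hadef]
    linear_combination huv + (m10 * v ^ 2 + 2 * u * m00 * v + m00 ^ 2 * v ^ 2 * t) * ht
      + (- (t * v ^ 2)) * h00
  have hMex : M = !![m00, m01; m10, -m00] := by
    ext i j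
    fin_cases i <;> fin_cases j <;> simp [← hm00d, ← hm01d, ← hm10d, htr ▸ hm11d.symm]
  have hBM : B * M = Jmat p ε * B := by
    rw [hMex, hBdef]
    ext i j
    fin_cases i <;> fin_cases j <;>
      simp [Jmat, Matrix.mul_apply, Fin.sum_univ_two] <;>
      first
      | (linear_combination hcdef)
      | (linear_combination -hcdef)
      | (linear_combination hddef)
      | (linear_combination -hddef)
      | (linear_combination m00 * hcdef + m10 * hddef + a * h00)
      | (linear_combination -(m00 * hcdef + m10 * hddef + a * h00))
      | (linear_combination m01 * hcdef - m00 * hddef + b * h11)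
      | (linear_combination -(m01 * hcdef - m00 * hddef + b * h11))
  obtain ⟨A, hA⟩ := exists_SL2_lift p B hdet
  refine ⟨A, ?_⟩
  rw [hA]
  have hinv : B * B⁻¹ = 1 :=
    Matrix.mul_nonsing_inv B (by rw [hdet]; exact isUnit_one)
  rw [mul_assoc]
  rw [show M * B⁻¹ = B⁻¹ * Jmat p ε from ?_]
  · rw [← mul_assoc, hinv, one_mul]
  · have h2 : B⁻¹ * (B * (M * B⁻¹)) = B⁻¹ * (Jmat p ε * (B * B⁻¹)) := by
      rw [← mul_assoc (Jmat p ε), ← hBM, mul_assoc]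
    have h3 : B⁻¹ * B = 1 :=
      Matrix.nonsing_inv_mul B (by rw [hdet]; exact isUnit_one)
    rw [← mul_assoc, ← mul_assoc, h3, one_mul, hinv, mul_one] at h2
    exact h2
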